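/- Let K = n and M = ⌈n^α⌉ for a constant 0 < α < 1/2, and suppose each node's cache is an independent uniformly random multiset of size M over the K files. Set δ = (1−α)/3 and let μ be any constant with μ ≥ 5/(1−2α). Then with probability at least 1 − O(1/n) the placement is (δ,μ)-good: every node u has t(u) ≥ δM distinct cached files, and every pair of distinct nodes u, v satisfies t(u,v) < μ. -/

import Mathlib

open scoped Classical BigOperators

/-- Probability of an event under the uniform measure on a finite type. -/
noncomputable def unifProb {Ω : Type*} [Fintype Ω] (E : Set Ω) : ℝ :=
  ((Finset.univ.filter (fun ω => ω ∈ E)).card : ℝ) / (Fintype.card Ω : ℝ)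

/-- `t(u)`: the number of distinct files in the cache (a multiset of size `M` over the
`K` files) of node `u`. -/
noncomputable def tOne {n K M : ℕ} (ω : Fin n → Sym (Fin K) M) (u : Fin n) : ℕ :=
  (ω u).toMultiset.toFinset.card

/-- `t(u,v)`: the number of distinct files cached at both `u` and `v`. -/
noncomputable def tTwo {n K M : ℕ} (ω : Fin n → Sym (Fin K) M) (u v : Fin n) : ℕ :=
  ((ω u).toMultiset.toFinset ∩ (ω v).toMultiset.toFinset).card

/-- A placement is `(δ,μ)`-good if every node caches at least `δ·M` distinct files and
every pair of distinct nodes shares fewer than `μ` distinct files. -/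
def goodPlacement {n K M : ℕ} (δ : ℝ) (μ : ℕ) (ω : Fin n → Sym (Fin K) M) : Prop :=
  (∀ u, δ * (M : ℝ) ≤ (tOne ω u : ℝ)) ∧ ∀ u v, u ≠ v → tTwo ω u v < μ

open Finset


open Finset

/-- ratio lemma: `(n+1)^μ * C(n+m, m) ≤ (m+μ)^μ * C(n+m+μ, m+μ)` -/

lemma choose_le_two_pow (a b : ℕ) : a.choose b ≤ 2 ^ a := by
  by_cases h : b ≤ a
  · calc a.choose b ≤ ∑ m ∈ range (a + 1), a.choose m :=
        Finset.single_le_sum (fun i _ => Nat.zero_le _) (mem_range.2 (by omega))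
      _ = 2 ^ a := Nat.sum_range_choose a
  · rw [Nat.choose_eq_zero_of_lt (by omega)]; exact Nat.zero_le _

lemma aux_ratio (n : ℕ) : ∀ (μ m : ℕ),
    (n+1)^μ * (n + m).choose m ≤ (m+μ)^μ * (n + m + μ).choose (m+μ) := by
  intro μ
  induction μ with
  | zero => simp
  | succ μ ih =>
    intro m
    have hid : (n + m + μ + 1) * (n + m + μ).choose (m + μ)
        = (n + m + μ + 1).choose (m + μ + 1) * (m + μ + 1) :=
      Nat.add_one_mul_choose_eq (n + m + μ) (m + μ)
    have key : (n+1) * ((m+μ)^μ * (n + m + μ).choose (m+μ)) * (m + μ + 1)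
        ≤ (m+(μ+1))^(μ+1) * (n + m + (μ+1)).choose (m+(μ+1)) * (m + μ + 1) := by
      have h1 : (m+(μ+1))^(μ+1) * (n + m + (μ+1)).choose (m+(μ+1)) * (m + μ + 1)
          = (m+μ+1)^(μ+1) * ((n + m + μ + 1) * (n + m + μ).choose (m + μ)) := by
        rw [show n + m + (μ+1) = n + m + μ + 1 by ring, show m+(μ+1) = m+μ+1 by ring, hid]
        ring
      rw [h1]
      have h2 : (n+1) * (m+μ)^μ * (m + μ + 1) ≤ (m+μ+1)^(μ+1) * (n + m + μ + 1) := by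
        calc (n+1) * (m+μ)^μ * (m + μ + 1) ≤ (n + m + μ + 1) * (m+μ+1)^μ * (m+μ+1) := by
              exact Nat.mul_le_mul (Nat.mul_le_mul (by omega) (Nat.pow_le_pow_left (by omega) μ)) le_rfl
          _ = (m+μ+1)^(μ+1) * (n + m + μ + 1) := by ring
      calc (n+1) * ((m+μ)^μ * (n + m + μ).choose (m+μ)) * (m + μ + 1)
          = ((n+1) * (m+μ)^μ * (m + μ + 1)) * (n + m + μ).choose (m+μ) := by ring
        _ ≤ ((m+μ+1)^(μ+1) * (n + m + μ + 1)) * (n + m + μ).choose (m+μ) :=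
            Nat.mul_le_mul_right _ h2
        _ = (m+μ+1)^(μ+1) * ((n + m + μ + 1) * (n + m + μ).choose (m + μ)) := by ring
    have hmain : (n+1)^(μ+1) * (n + m).choose m * (m + μ + 1)
        ≤ (m+(μ+1))^(μ+1) * (n + m + (μ+1)).choose (m+(μ+1)) * (m + μ + 1) := by
      calc (n+1)^(μ+1) * (n + m).choose m * (m + μ + 1)
          = (n+1) * ((n+1)^μ * (n + m).choose m) * (m + μ + 1) := by ring
        _ ≤ (n+1) * ((m+μ)^μ * (n + m + μ).choose (m+μ)) * (m + μ + 1) := by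
            exact Nat.mul_le_mul (Nat.mul_le_mul_left _ (ih m)) le_rfl
        _ ≤ _ := key
    exact Nat.le_of_mul_le_mul_right hmain (by omega)

/-- `n^(m+1) ≤ (m+1)^(m+1) * C(n+m, m+1)` -/
lemma aux_lower (n : ℕ) : ∀ m : ℕ, n^(m+1) ≤ (m+1)^(m+1) * (n + m).choose (m+1) := by
  intro m
  induction m with
  | zero => simpa using le_of_eq (Nat.choose_one_right n).symm
  | succ m ih =>
    have hid : (n + m + 1) * (n + m).choose (m + 1)
        = (n + m + 1).choose (m + 2) * (m + 2) :=
      Nat.add_one_mul_choose_eq (n + m) (m + 1)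
    have key : n^(m+2) * (m+2) ≤ (m+2)^(m+2) * (n + (m+1)).choose (m+2) * (m+2) := by
      calc n^(m+2) * (m+2) = n * n^(m+1) * (m+2) := by ring
        _ ≤ n * ((m+1)^(m+1) * (n + m).choose (m+1)) * (m+2) :=
            Nat.mul_le_mul (Nat.mul_le_mul_left _ ih) le_rfl
        _ = (n * (m+1)^(m+1)) * ((n+m).choose (m+1) * (m+2)) := by ring
        _ ≤ ((n + m + 1) * (m+2)^(m+1)) * ((n+m).choose (m+1) * (m+2)) := by
            exact Nat.mul_le_mul (Nat.mul_le_mul (by omega) (Nat.pow_le_pow_left (by omega) _)) le_rfl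
        _ = (m+2)^(m+1) * ((n + m + 1) * (n + m).choose (m + 1)) * (m+2) := by ring
        _ = (m+2)^(m+1) * ((n + m + 1).choose (m + 2) * (m + 2)) * (m+2) := by rw [hid]
        _ = (m+2)^(m+2) * (n + (m+1)).choose (m+2) * (m+2) := by
            rw [show n + (m+1) = n + m + 1 by ring]; ring
    exact Nat.le_of_mul_le_mul_right key (by omega)

lemma card_supp_subset {n M : ℕ} (S : Finset (Fin n)) (hS : S.Nonempty) :
    (univ.filter (fun s : Sym (Fin n) M => s.toMultiset.toFinset ⊆ S)).card
      ≤ (S.card + M - 1).choose M := by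
  obtain ⟨e, he⟩ := hS
  have hcard : ((univ : Finset (Sym {x // x ∈ S} M))).card = (S.card + M - 1).choose M := by
    rw [Finset.card_univ, Sym.card_sym_eq_choose, Fintype.card_coe]
  rw [← hcard]
  set f : Fin n → {x // x ∈ S} := fun x => if hx : x ∈ S then ⟨x, hx⟩ else ⟨e, he⟩ with hf
  apply Finset.card_le_card_of_injOn (fun s => s.map f) (fun s _ => mem_univ _)
  intro s hs t ht hst
  simp only [mem_coe, mem_filter] at hs ht
  have key : ∀ u : Sym (Fin n) M, u.toMultiset.toFinset ⊆ S →
      Sym.map Subtype.val (Sym.map f u) = u := by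
    intro u hu
    rw [Sym.map_map]
    have : ∀ x ∈ u, (Subtype.val ∘ f) x = x := by
      intro x hx
      have hxS : x ∈ S := hu (Multiset.mem_toFinset.2 hx)
      simp [hf, hxS]
    rw [Sym.map_congr this, Sym.map_id']
  calc s = Sym.map Subtype.val (Sym.map f s) := (key s hs.2).symm
    _ = Sym.map Subtype.val (Sym.map f t) := by simp only at hst; rw [hst]
    _ = t := key t ht.2

lemma card_contains {n M μ : ℕ} (hn : 0 < n) (hμM : μ ≤ M) (T : Finset (Fin n)) (hT : T.card = μ) :
    (univ.filter (fun s : Sym (Fin n) M => T ⊆ s.toMultiset.toFinset)).card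
      ≤ (n + (M - μ) - 1).choose (M - μ) := by
  classical
  have hcard : ((univ : Finset (Sym (Fin n) (M - μ)))).card = (n + (M - μ) - 1).choose (M - μ) := by
    rw [Finset.card_univ, Sym.card_sym_eq_choose, Fintype.card_fin]
  rw [← hcard]
  have hle : ∀ u : Sym (Fin n) M, T ⊆ u.toMultiset.toFinset → T.val ≤ u.toMultiset := by
    intro u hu
    rw [Multiset.le_iff_subset T.nodup]
    intro x hx
    exact Multiset.mem_toFinset.1 (hu hx)
  set g : Sym (Fin n) M → Sym (Fin n) (M - μ) := fun s =>
    if h : T.val ≤ s.toMultiset then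
      Sym.mk (s.toMultiset - T.val)
        (by rw [Multiset.card_sub h, Sym.card_coe, ← Finset.card_def, hT])
    else Sym.replicate (M - μ) ⟨0, hn⟩ with hg
  apply Finset.card_le_card_of_injOn g (fun s _ => mem_univ _)
  intro s hs t ht hst
  simp only [mem_coe, mem_filter] at hs ht
  have hsle := hle s hs.2
  have htle := hle t ht.2
  have h1 : (g s : Multiset (Fin n)) = s.toMultiset - T.val := by simp [hg, hsle]
  have h2 : (g t : Multiset (Fin n)) = t.toMultiset - T.val := by simp [hg, htle]
  have : s.toMultiset - T.val = t.toMultiset - T.val := by rw [← h1, ← h2, hst]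
  apply Sym.coe_injective
  calc (s : Multiset (Fin n)) = s.toMultiset - T.val + T.val := (tsub_add_cancel_of_le hsle).symm
    _ = t.toMultiset - T.val + T.val := by rw [this]
    _ = (t : Multiset (Fin n)) := tsub_add_cancel_of_le htle

lemma card_pi_one {n : ℕ} {Ω' : Type*} [Fintype Ω'] [DecidableEq Ω'] (A : Finset Ω') (u : Fin n) :
    (univ.filter (fun ω : Fin n → Ω' => ω u ∈ A)).card
      = A.card * (Fintype.card Ω') ^ (n - 1) := by
  classical
  have heq : univ.filter (fun ω : Fin n → Ω' => ω u ∈ A)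
      = Fintype.piFinset (fun i => if i = u then A else univ) := by
    ext ω
    simp only [mem_filter, mem_univ, true_and, Fintype.mem_piFinset]
    constructor
    · intro h i; by_cases hi : i = u <;> simp [hi, h]
    · intro h; have := h u; simpa using this
  rw [heq, Fintype.card_piFinset]
  rw [← Finset.mul_prod_erase univ _ (mem_univ u)]
  simp only [if_pos rfl]
  congr 1
  rw [Finset.prod_congr rfl (fun i hi => by rw [if_neg (Finset.ne_of_mem_erase hi)]),
    Finset.prod_const, Finset.card_erase_of_mem (mem_univ u), Finset.card_univ,
    Finset.card_univ, Fintype.card_fin]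

lemma card_pi_two {n : ℕ} {Ω' : Type*} [Fintype Ω'] [DecidableEq Ω'] (A B : Finset Ω')
    {u v : Fin n} (huv : u ≠ v) :
    (univ.filter (fun ω : Fin n → Ω' => ω u ∈ A ∧ ω v ∈ B)).card
      = A.card * B.card * (Fintype.card Ω') ^ (n - 2) := by
  classical
  have heq : univ.filter (fun ω : Fin n → Ω' => ω u ∈ A ∧ ω v ∈ B)
      = Fintype.piFinset (fun i => if i = u then A else if i = v then B else univ) := by
    ext ω
    simp only [mem_filter, mem_univ, true_and, Fintype.mem_piFinset]
    constructor
    · intro h i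
      by_cases hi : i = u
      · simp [hi, huv, h.1]
      · by_cases hi' : i = v <;> simp [hi, hi', Ne.symm huv, h.2]
    · intro h
      have h1 := h u; have h2 := h v
      rw [if_pos rfl] at h1
      rw [if_neg (Ne.symm huv), if_pos rfl] at h2
      exact ⟨h1, h2⟩
  rw [heq, Fintype.card_piFinset]
  have hvmem : v ∈ univ.erase u := Finset.mem_erase.2 ⟨Ne.symm huv, mem_univ v⟩
  rw [← Finset.mul_prod_erase univ _ (mem_univ u), ← Finset.mul_prod_erase _ _ hvmem]
  rw [if_pos rfl, if_neg (Ne.symm huv), if_pos rfl]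
  have hrest : ∀ i ∈ (univ.erase u).erase v,
      (if i = u then A else if i = v then B else univ).card = Fintype.card Ω' := by
    intro i hi
    have hi1 : i ≠ v := Finset.ne_of_mem_erase hi
    have hi2 : i ≠ u := Finset.ne_of_mem_erase (Finset.mem_of_mem_erase hi)
    rw [if_neg hi2, if_neg hi1, Finset.card_univ]
  rw [Finset.prod_congr rfl hrest, Finset.prod_const,
    Finset.card_erase_of_mem hvmem, Finset.card_erase_of_mem (mem_univ u),
    Finset.card_univ, Fintype.card_fin]
  have : n - 1 - 1 = n - 2 := by omega
  rw [this]; ring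
lemma bad_count {n M : ℕ} (hn : 0 < n) (μ d : ℕ) (hd1 : 1 ≤ d) (hdn : d ≤ n) (hμM : μ ≤ M)
    (δ : ℝ) (hδd : ∀ t : ℕ, (t:ℝ) < δ * M → t ≤ d) :
    (univ.filter (fun ω : Fin n → Sym (Fin n) M => ¬ goodPlacement δ μ ω)).card
      ≤ n * (n.choose d * (d + M - 1).choose M) * (Fintype.card (Sym (Fin n) M)) ^ (n-1)
        + n^2 * (n.choose μ * ((n + (M - μ) - 1).choose (M - μ))^2)
            * (Fintype.card (Sym (Fin n) M)) ^ (n-2) := by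
  classical
  set Ω' := Sym (Fin n) M with hΩ'
  set A1 : Finset Ω' := univ.filter (fun s => s.toMultiset.toFinset.card ≤ d) with hA1
  set A2 : Finset (Fin n) → Finset Ω' :=
    fun T => univ.filter (fun s => T ⊆ s.toMultiset.toFinset) with hA2
  -- bound on A1.card
  have hA1card : A1.card ≤ n.choose d * (d + M - 1).choose M := by
    have hsub : A1 ⊆ (powersetCard d (univ : Finset (Fin n))).biUnion
        (fun S => univ.filter (fun s : Ω' => s.toMultiset.toFinset ⊆ S)) := by
      intro s hs
      rw [hA1, mem_filter] at hs
      obtain ⟨S, hS1, _, hS3⟩ := Finset.exists_subsuperset_card_eq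
        (Finset.subset_univ s.toMultiset.toFinset) hs.2 (by simpa using hdn)
      exact Finset.mem_biUnion.2 ⟨S, Finset.mem_powersetCard.2 ⟨Finset.subset_univ S, hS3⟩,
        mem_filter.2 ⟨mem_univ _, hS1⟩⟩
    calc A1.card ≤ _ := Finset.card_le_card hsub
      _ ≤ ∑ S ∈ powersetCard d (univ : Finset (Fin n)),
            (univ.filter (fun s : Ω' => s.toMultiset.toFinset ⊆ S)).card :=
          Finset.card_biUnion_le
      _ ≤ (powersetCard d (univ : Finset (Fin n))).card * (d + M - 1).choose M := by
          rw [← smul_eq_mul]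
          apply Finset.sum_le_card_nsmul
          intro S hS
          obtain ⟨_, hScard⟩ := Finset.mem_powersetCard.1 hS
          have hSne : S.Nonempty := Finset.card_pos.1 (by omega)
          simpa [hScard] using card_supp_subset S hSne (M := M)
      _ = n.choose d * (d + M - 1).choose M := by
          rw [Finset.card_powersetCard, Finset.card_univ, Fintype.card_fin]
  -- bound on A2 T card
  have hA2card : ∀ T ∈ powersetCard μ (univ : Finset (Fin n)),
      (A2 T).card ≤ (n + (M - μ) - 1).choose (M - μ) := by
    intro T hT
    obtain ⟨_, hTcard⟩ := Finset.mem_powersetCard.1 hT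
    exact card_contains hn hμM T hTcard
  -- inclusion of the bad event
  have hincl : (univ.filter (fun ω : Fin n → Ω' => ¬ goodPlacement δ μ ω))
      ⊆ (univ.biUnion fun u => univ.filter (fun ω : Fin n → Ω' => ω u ∈ A1))
        ∪ (univ.biUnion fun u => univ.biUnion fun v =>
            univ.filter (fun ω : Fin n → Ω' => u ≠ v ∧ μ ≤ tTwo ω u v)) := by
    intro ω hω
    rw [mem_filter] at hω
    rcases Classical.em (∀ u, δ * (M:ℝ) ≤ (tOne ω u : ℝ)) with hA | hA
    · have hB : ¬ ∀ u v, u ≠ v → tTwo ω u v < μ := fun hB => hω.2 ⟨hA, hB⟩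
      push_neg at hB
      obtain ⟨u, v, huv, hμle⟩ := hB
      exact Finset.mem_union_right _ (Finset.mem_biUnion.2 ⟨u, mem_univ _,
        Finset.mem_biUnion.2 ⟨v, mem_univ _, mem_filter.2 ⟨mem_univ _, huv, hμle⟩⟩⟩)
    · push_neg at hA
      obtain ⟨u, hu⟩ := hA
      refine Finset.mem_union_left _ (Finset.mem_biUnion.2 ⟨u, mem_univ _,
        mem_filter.2 ⟨mem_univ _, ?_⟩⟩)
      rw [hA1, mem_filter]
      exact ⟨mem_univ _, hδd _ hu⟩
  -- cards of the pieces
  have hone : ∀ u : Fin n, (univ.filter (fun ω : Fin n → Ω' => ω u ∈ A1)).card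
      = A1.card * (Fintype.card Ω') ^ (n-1) := fun u => card_pi_one A1 u
  have htwo : ∀ u v : Fin n,
      (univ.filter (fun ω : Fin n → Ω' => u ≠ v ∧ μ ≤ tTwo ω u v)).card
        ≤ n.choose μ * ((n + (M - μ) - 1).choose (M - μ))^2 * (Fintype.card Ω') ^ (n-2) := by
    intro u v
    by_cases huv : u = v
    · have : (univ.filter (fun ω : Fin n → Ω' => u ≠ v ∧ μ ≤ tTwo ω u v)) = ∅ := by
        apply Finset.filter_false_of_mem
        intro ω _ h
        exact h.1 huv
      simp [this]
    · have hsub : (univ.filter (fun ω : Fin n → Ω' => u ≠ v ∧ μ ≤ tTwo ω u v))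
          ⊆ (powersetCard μ (univ : Finset (Fin n))).biUnion
              (fun T => univ.filter (fun ω : Fin n → Ω' => ω u ∈ A2 T ∧ ω v ∈ A2 T)) := by
        intro ω hω
        rw [mem_filter] at hω
        obtain ⟨T, hT1, hT2⟩ := Finset.exists_subset_card_eq hω.2.2
        refine Finset.mem_biUnion.2 ⟨T, Finset.mem_powersetCard.2 ⟨Finset.subset_univ T, hT2⟩,
          mem_filter.2 ⟨mem_univ _, ?_, ?_⟩⟩
        · rw [hA2, mem_filter]
          exact ⟨mem_univ _, hT1.trans Finset.inter_subset_left⟩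
        · rw [hA2, mem_filter]
          exact ⟨mem_univ _, hT1.trans Finset.inter_subset_right⟩
      calc (univ.filter (fun ω : Fin n → Ω' => u ≠ v ∧ μ ≤ tTwo ω u v)).card
          ≤ _ := Finset.card_le_card hsub
        _ ≤ ∑ T ∈ powersetCard μ (univ : Finset (Fin n)),
              (univ.filter (fun ω : Fin n → Ω' => ω u ∈ A2 T ∧ ω v ∈ A2 T)).card :=
            Finset.card_biUnion_le
        _ ≤ (powersetCard μ (univ : Finset (Fin n))).card
              * (((n + (M - μ) - 1).choose (M - μ))^2 * (Fintype.card Ω') ^ (n-2)) := by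
            rw [← smul_eq_mul]
            apply Finset.sum_le_card_nsmul
            intro T hT
            rw [card_pi_two (A2 T) (A2 T) huv]
            have := hA2card T hT
            have h2 : (A2 T).card * (A2 T).card ≤ ((n + (M - μ) - 1).choose (M - μ))^2 := by
              rw [sq]; exact Nat.mul_le_mul this this
            exact Nat.mul_le_mul_right _ h2
        _ = n.choose μ * ((n + (M - μ) - 1).choose (M - μ))^2 * (Fintype.card Ω') ^ (n-2) := by
            rw [Finset.card_powersetCard, Finset.card_univ, Fintype.card_fin]; ring
  calc (univ.filter (fun ω : Fin n → Ω' => ¬ goodPlacement δ μ ω)).card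
      ≤ _ := Finset.card_le_card hincl
    _ ≤ ((univ.biUnion fun u => univ.filter (fun ω : Fin n → Ω' => ω u ∈ A1))).card
        + ((univ.biUnion fun u => univ.biUnion fun v =>
            univ.filter (fun ω : Fin n → Ω' => u ≠ v ∧ μ ≤ tTwo ω u v))).card :=
        Finset.card_union_le _ _
    _ ≤ n * (n.choose d * (d + M - 1).choose M) * (Fintype.card Ω') ^ (n-1)
        + n^2 * (n.choose μ * ((n + (M - μ) - 1).choose (M - μ))^2)
            * (Fintype.card Ω') ^ (n-2) := by
      gcongr
      · calc ((univ.biUnion fun u => univ.filter (fun ω : Fin n → Ω' => ω u ∈ A1))).card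
            ≤ ∑ u : Fin n, (univ.filter (fun ω : Fin n → Ω' => ω u ∈ A1)).card :=
              Finset.card_biUnion_le
          _ = n * (A1.card * (Fintype.card Ω') ^ (n-1)) := by
              rw [Finset.sum_congr rfl (fun u _ => hone u), Finset.sum_const, smul_eq_mul,
                Finset.card_univ, Fintype.card_fin]
          _ ≤ n * (n.choose d * (d + M - 1).choose M) * (Fintype.card Ω') ^ (n-1) :=
              le_of_le_of_eq (Nat.mul_le_mul_left n (Nat.mul_le_mul_right _ hA1card)) (by ring)
      · calc ((univ.biUnion fun u => univ.biUnion fun v =>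
            univ.filter (fun ω : Fin n → Ω' => u ≠ v ∧ μ ≤ tTwo ω u v))).card
            ≤ ∑ u : Fin n, ((univ.biUnion fun v =>
                univ.filter (fun ω : Fin n → Ω' => u ≠ v ∧ μ ≤ tTwo ω u v))).card :=
              Finset.card_biUnion_le
          _ ≤ ∑ _u : Fin n, ∑ _v : Fin n, (n.choose μ * ((n + (M - μ) - 1).choose (M - μ))^2
              * (Fintype.card Ω') ^ (n-2)) := by
              apply Finset.sum_le_sum
              intro u _
              calc ((univ.biUnion fun v =>
                  univ.filter (fun ω : Fin n → Ω' => u ≠ v ∧ μ ≤ tTwo ω u v))).card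
                  ≤ ∑ v : Fin n, (univ.filter
                      (fun ω : Fin n → Ω' => u ≠ v ∧ μ ≤ tTwo ω u v)).card :=
                    Finset.card_biUnion_le
                _ ≤ _ := Finset.sum_le_sum (fun v _ => htwo u v)
          _ = n^2 * (n.choose μ * ((n + (M - μ) - 1).choose (M - μ))^2)
              * (Fintype.card Ω') ^ (n-2) := by
              simp only [Finset.sum_const, smul_eq_mul, Finset.card_univ, Fintype.card_fin]
              ring

lemma aux_lower' (n M : ℕ) (hM : 1 ≤ M) : n^M ≤ M^M * (n + M - 1).choose M := by
  obtain ⟨m, rfl⟩ : ∃ m, M = m + 1 := ⟨M - 1, by omega⟩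
  have h := aux_lower n m
  have e : n + (m+1) - 1 = n + m := by omega
  rw [e]
  exact h

lemma aux_ratio' (n M μ : ℕ) (hn : 0 < n) (hμM : μ ≤ M) :
    n^μ * (n + (M-μ) - 1).choose (M-μ) ≤ M^μ * (n + M - 1).choose M := by
  obtain ⟨n', rfl⟩ : ∃ n', n = n' + 1 := ⟨n - 1, by omega⟩
  obtain ⟨k, rfl⟩ : ∃ k, M = k + μ := ⟨M - μ, by omega⟩
  have e0 : k + μ - μ = k := by omega
  have e1 : n' + 1 + k - 1 = n' + k := by omega
  have e3 : n' + 1 + (k + μ) - 1 = n' + k + μ := by omega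
  rw [e0, e1, e3]
  exact aux_ratio n' μ k

set_option maxHeartbeats 1000000 in
/-- Let `K = n` and `M = ⌈n^α⌉` for a constant `0 < α < 1/2`, and
suppose each node's cache is an independent uniformly random multiset of size `M` over
the `K` files.  Set `δ = (1-α)/3` and let `μ` be a constant with `μ ≥ 5/(1-2α)`.  Then
with probability at least `1 - O(1/n)` the placement is `(δ,μ)`-good. -/
theorem statement7 (α : ℝ) (hα0 : 0 < α) (hα1 : α < 1 / 2) (μ : ℕ)
    (hμ : 5 / (1 - 2 * α) ≤ (μ : ℝ)) :
    ∃ C : ℝ, 0 < C ∧ ∃ N : ℕ, ∀ n : ℕ, N ≤ n →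
      1 - C / (n : ℝ) ≤
        unifProb {ω : Fin n → Sym (Fin n) ⌈(n : ℝ) ^ α⌉₊ |
          goodPlacement ((1 - α) / 3) μ ω} := by
  have hα2 : (0:ℝ) < 1 - 2*α := by linarith
  set δ : ℝ := (1 - α)/3 with hδdef
  have hδ0 : 0 < δ := by rw [hδdef]; linarith
  have hδ1 : δ ≤ 1 := by rw [hδdef]; linarith
  set c : ℝ := 2*(1-α)/3 with hcdef
  have hc0 : 0 < c := by rw [hcdef]; linarith
  have hμ5 : 5 ≤ (1 - 2*α) * μ := by
    rw [div_le_iff₀ hα2] at hμ; linarith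
  refine ⟨1 + 4^μ, by positivity, ?_⟩
  have tnat : Filter.Tendsto (fun n : ℕ => (n:ℝ)) Filter.atTop Filter.atTop :=
    tendsto_natCast_atTop_atTop
  have tα : Filter.Tendsto (fun n : ℕ => (n:ℝ)^α) Filter.atTop Filter.atTop :=
    (tendsto_rpow_atTop hα0).comp tnat
  have tc2 : Filter.Tendsto (fun n : ℕ => (n:ℝ)^(c/2)) Filter.atTop Filter.atTop :=
    (tendsto_rpow_atTop (by linarith)).comp tnat
  have t1α : Filter.Tendsto (fun n : ℕ => (n:ℝ)^(1-α)) Filter.atTop Filter.atTop :=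
    (tendsto_rpow_atTop (by linarith)).comp tnat
  have E : ∀ᶠ n : ℕ in Filter.atTop,
      2 ≤ n ∧ (8:ℝ) ≤ (n:ℝ)^(c/2) ∧ 4/c + 2 ≤ (n:ℝ)^α ∧ (μ:ℝ) ≤ (n:ℝ)^α
        ∧ 3/(1-α) ≤ (n:ℝ)^α ∧ (2:ℝ) ≤ (n:ℝ)^(1-α) := by
    filter_upwards [Filter.eventually_ge_atTop 2, tc2.eventually_ge_atTop 8,
      tα.eventually_ge_atTop (4/c+2), tα.eventually_ge_atTop (μ:ℝ),
      tα.eventually_ge_atTop (3/(1-α)), t1α.eventually_ge_atTop 2] with n h1 h2 h3 h4 h5 h6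
    exact ⟨h1, h2, h3, h4, h5, h6⟩
  obtain ⟨N₀, hN₀⟩ := Filter.eventually_atTop.1 E
  refine ⟨N₀, fun n hn => ?_⟩
  obtain ⟨hn2, h8, h4c, hμα, h3α, h2α⟩ := hN₀ n hn
  set X : ℝ := (n:ℝ) with hX
  have hX2 : (2:ℝ) ≤ X := by rw [hX]; exact_mod_cast hn2
  have hX0 : (0:ℝ) < X := by linarith
  have hX1 : (1:ℝ) ≤ X := by linarith
  have hXα0 : (0:ℝ) < X^α := Real.rpow_pos_of_pos hX0 α
  have hXα1 : (1:ℝ) ≤ X^α := Real.one_le_rpow hX1 (le_of_lt hα0)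
  set M : ℕ := ⌈X^α⌉₊ with hM
  have hMlb : X^α ≤ (M:ℝ) := Nat.le_ceil _
  have hMub : (M:ℝ) ≤ 2*X^α := by
    have h := Nat.ceil_lt_add_one (le_of_lt hXα0)
    rw [← hM] at h
    linarith
  have hM1 : 1 ≤ M := Nat.one_le_ceil_iff.2 hXα0
  have hμM : μ ≤ M := by
    have : (μ:ℝ) ≤ (M:ℝ) := le_trans hμα hMlb
    exact_mod_cast this
  set d : ℕ := ⌊δ * (M:ℝ)⌋₊ with hd
  have hδM1 : (1:ℝ) ≤ δ * M := by
    have h1 : δ * (3/(1-α)) = 1 := by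
      have hne : (1:ℝ) - α ≠ 0 := by linarith
      rw [hδdef]; field_simp
    calc (1:ℝ) = δ * (3/(1-α)) := h1.symm
      _ ≤ δ * X^α := by
          apply mul_le_mul_of_nonneg_left h3α (le_of_lt hδ0)
      _ ≤ δ * M := mul_le_mul_of_nonneg_left hMlb (le_of_lt hδ0)
  have hd1 : 1 ≤ d := Nat.le_floor (by exact_mod_cast hδM1)
  have hδMpos : (0:ℝ) ≤ δ * M := by linarith
  have hddelta : (d:ℝ) ≤ δ * M := Nat.floor_le hδMpos
  have hdM : d ≤ M := by
    have hMpos : (0:ℝ) ≤ (M:ℝ) := by positivity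
    have : (d:ℝ) ≤ (M:ℝ) := le_trans hddelta (by nlinarith)
    exact_mod_cast this
  have hMX : 2*X^α ≤ X := by
    have hsplit : X^(1-α) * X^α = X := by
      rw [← Real.rpow_add hX0]
      simp
    nlinarith
  have hMn : M ≤ n := by
    have : (M:ℝ) ≤ (n:ℝ) := le_trans hMub hMX
    exact_mod_cast this
  have hdn : d ≤ n := le_trans hdM hMn
  have hn0 : 0 < n := by omega
  set Nc : ℕ := (n + M - 1).choose M with hNcdef
  have hcardΩ : Fintype.card (Sym (Fin n) M) = Nc := by
    rw [Sym.card_sym_eq_choose, Fintype.card_fin]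
  have hNcpos : 0 < Nc := Nat.choose_pos (by omega)
  have hNcposR : (0:ℝ) < (Nc:ℝ) := by exact_mod_cast hNcpos
  -- nat inequalities
  have hlow : n^M ≤ M^M * Nc := aux_lower' n M hM1
  have hrat : n^μ * (n + (M-μ) - 1).choose (M-μ) ≤ M^μ * Nc := aux_ratio' n M μ hn0 hμM
  -- real versions of key quantities
  set a1 : ℕ := n.choose d * (d + M - 1).choose M with ha1
  set b : ℕ := (n + (M-μ) - 1).choose (M-μ) with hb
  -- KB1 : X^2 * a1 ≤ Nc
  have KB1 : X * X * (a1:ℝ) ≤ (Nc:ℝ) := by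
    have hMpow : (0:ℝ) < (M:ℝ)^M := by positivity
    rw [← mul_le_mul_iff_of_pos_right hMpow]
    have step1 : (a1:ℝ) ≤ X^(d:ℝ) * (4:ℝ)^M := by
      have hnat : a1 ≤ n^d * 4^M := by
        rw [ha1]
        apply Nat.mul_le_mul (Nat.choose_le_pow n d)
        calc (d + M - 1).choose M ≤ 2^(d + M - 1) := choose_le_two_pow _ _
          _ ≤ 2^(2*M) := Nat.pow_le_pow_right (by omega) (by omega)
          _ = 4^M := by rw [pow_mul]; norm_num
      calc (a1:ℝ) ≤ ((n^d * 4^M : ℕ):ℝ) := by exact_mod_cast hnat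
        _ = X^(d:ℝ) * (4:ℝ)^M := by
            push_cast
            rw [Real.rpow_natCast]
    have h4M : (4:ℝ) * (M:ℝ) ≤ X^(c/2+α) := by
      have hsplit : X^(c/2+α) = X^(c/2) * X^α := Real.rpow_add hX0 _ _
      have hc2pos : (0:ℝ) ≤ X^(c/2) := le_of_lt (Real.rpow_pos_of_pos hX0 _)
      rw [hsplit]
      nlinarith
    have step2 : (4:ℝ)^M * (M:ℝ)^M ≤ X^((c/2+α)*M) := by
      have : (4:ℝ)^M * (M:ℝ)^M = ((4:ℝ)*M)^M := by rw [mul_pow]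
      rw [this]
      calc ((4:ℝ)*M)^M ≤ (X^(c/2+α))^M := by
            apply pow_le_pow_left₀ (by positivity) h4M
        _ = X^((c/2+α)*M) := by
            rw [← Real.rpow_natCast (X^(c/2+α)) M, ← Real.rpow_mul (le_of_lt hX0)]
    have hexp : 2 + (d:ℝ) + (c/2+α)*M ≤ (M:ℝ) := by
      have hMge : 4/c + 2 ≤ (M:ℝ) := le_trans h4c hMlb
      have h1 : c/2 + α = 1 - c := by rw [hcdef]; ring
      have hδc : δ = c/2 := by rw [hδdef, hcdef]; ring
      have hcM : 4 ≤ c * M := by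
        have h2 := mul_le_mul_of_nonneg_left hMge (le_of_lt hc0)
        have h3 : c * (4/c+2) = 4 + 2*c := by field_simp
        nlinarith
      rw [h1]
      rw [hδc] at hddelta
      nlinarith
    calc X * X * (a1:ℝ) * (M:ℝ)^M ≤ X * X * (X^(d:ℝ) * (4:ℝ)^M) * (M:ℝ)^M := by
          have := mul_le_mul_of_nonneg_left step1 (by positivity : (0:ℝ) ≤ X * X)
          nlinarith [hMpow]
      _ = (X * X * X^(d:ℝ)) * ((4:ℝ)^M * (M:ℝ)^M) := by ring
      _ ≤ (X * X * X^(d:ℝ)) * X^((c/2+α)*M) := by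
          apply mul_le_mul_of_nonneg_left step2
          positivity
      _ = X^(2 + (d:ℝ) + (c/2+α)*M) := by
          rw [Real.rpow_add hX0, Real.rpow_add hX0, Real.rpow_two]
          ring
      _ ≤ X^((M:ℝ)) := Real.rpow_le_rpow_of_exponent_le hX1 hexp
      _ = ((n^M : ℕ):ℝ) := by
          push_cast
          rw [Real.rpow_natCast]
      _ ≤ ((M^M * Nc : ℕ):ℝ) := by exact_mod_cast hlow
      _ = (Nc:ℝ) * (M:ℝ)^M := by push_cast; ring
  -- KB2 : X^3 * (choose * b^2) ≤ 4^μ * Nc^2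
  have KB2 : X * X * X * ((n.choose μ : ℝ) * (b:ℝ)^2) ≤ (4:ℝ)^μ * (Nc:ℝ)^2 := by
    have hX2μ : (0:ℝ) < X^(μ:ℝ) * X^(μ:ℝ) := by positivity
    rw [← mul_le_mul_iff_of_pos_right hX2μ]
    have hratR : X^(μ:ℝ) * (b:ℝ) ≤ (M:ℝ)^μ * (Nc:ℝ) := by
      calc X^(μ:ℝ) * (b:ℝ) = ((n^μ * b : ℕ):ℝ) := by
            push_cast; rw [Real.rpow_natCast]
        _ ≤ ((M^μ * Nc : ℕ):ℝ) := by exact_mod_cast hrat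
        _ = (M:ℝ)^μ * (Nc:ℝ) := by push_cast; ring
    have hchoose : (n.choose μ : ℝ) ≤ X^(μ:ℝ) := by
      calc (n.choose μ : ℝ) ≤ ((n^μ : ℕ):ℝ) := by exact_mod_cast Nat.choose_le_pow n μ
        _ = X^(μ:ℝ) := by push_cast; rw [Real.rpow_natCast]
    have hMμ' : (M:ℝ)^μ ≤ (2:ℝ)^μ * X^(α*(μ:ℝ)) := by
      calc (M:ℝ)^μ ≤ (2*X^α)^μ := pow_le_pow_left₀ (by positivity) hMub μ
        _ = (2:ℝ)^μ * (X^α)^μ := mul_pow _ _ _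
        _ = (2:ℝ)^μ * X^(α*(μ:ℝ)) := by
            rw [← Real.rpow_natCast (X^α) μ, ← Real.rpow_mul (le_of_lt hX0)]
    have hMμ : ((M:ℝ)^μ)^2 ≤ (4:ℝ)^μ * X^(2*α*μ) := by
      calc ((M:ℝ)^μ)^2 ≤ ((2:ℝ)^μ * X^(α*(μ:ℝ)))^2 := by
            apply pow_le_pow_left₀ (by positivity) hMμ'
        _ = (4:ℝ)^μ * X^(2*α*μ) := by
            rw [mul_pow]
            rw [show ((2:ℝ)^μ)^2 = 4^μ by rw [← pow_mul, pow_mul']; norm_num]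
            congr 1
            rw [← Real.rpow_natCast (X^(α*(μ:ℝ))) 2, ← Real.rpow_mul (le_of_lt hX0)]
            push_cast
            ring_nf
    have hexp2 : 3 + (μ:ℝ) + 2*α*μ ≤ 2*μ := by nlinarith
    have hb0 : (0:ℝ) ≤ (b:ℝ) := by positivity
    calc X * X * X * ((n.choose μ : ℝ) * (b:ℝ)^2) * (X^(μ:ℝ) * X^(μ:ℝ))
        = (X * X * X * (n.choose μ : ℝ)) * ((X^(μ:ℝ) * (b:ℝ)) * (X^(μ:ℝ) * (b:ℝ))) := by ring
      _ ≤ (X * X * X * X^(μ:ℝ)) * (((M:ℝ)^μ * (Nc:ℝ)) * ((M:ℝ)^μ * (Nc:ℝ))) := by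
          apply mul_le_mul
          · exact mul_le_mul_of_nonneg_left hchoose (by positivity)
          · apply mul_le_mul hratR hratR (by positivity) (by positivity)
          · positivity
          · positivity
      _ = (X * X * X * X^(μ:ℝ)) * ((M:ℝ)^μ)^2 * (Nc:ℝ)^2 := by ring
      _ ≤ (X * X * X * X^(μ:ℝ)) * ((4:ℝ)^μ * X^(2*α*μ)) * (Nc:ℝ)^2 := by
          apply mul_le_mul_of_nonneg_right _ (by positivity)
          exact mul_le_mul_of_nonneg_left hMμ (by positivity)
      _ = (4:ℝ)^μ * (Nc:ℝ)^2 * (X^(3 + (μ:ℝ) + 2*α*μ)) := by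
          rw [Real.rpow_add hX0, Real.rpow_add hX0]
          rw [show X^(3:ℝ) = X*X*X by
            rw [show (3:ℝ) = ((3:ℕ):ℝ) by norm_num, Real.rpow_natCast]; ring]
          ring
      _ ≤ (4:ℝ)^μ * (Nc:ℝ)^2 * (X^(2*(μ:ℝ))) := by
          apply mul_le_mul_of_nonneg_left _ (by positivity)
          exact Real.rpow_le_rpow_of_exponent_le hX1 hexp2
      _ = (4:ℝ)^μ * (Nc:ℝ)^2 * (X^(μ:ℝ) * X^(μ:ℝ)) := by
          rw [← Real.rpow_add hX0]
          ring_nf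
  -- the bad-count bound
  have hδd : ∀ t : ℕ, (t:ℝ) < δ * (M:ℝ) → t ≤ d := fun t ht =>
    Nat.le_floor (le_of_lt ht)
  have hbad := bad_count hn0 μ d hd1 hdn hμM δ hδd
  rw [hcardΩ] at hbad
  -- total count
  have htotal : Fintype.card (Fin n → Sym (Fin n) M) = Nc ^ n := by
    rw [Fintype.card_fun, hcardΩ, Fintype.card_fin]
  set bad : Finset (Fin n → Sym (Fin n) M) :=
    univ.filter (fun ω => ¬ goodPlacement δ μ ω) with hbaddef
  have hbadX : (bad.card : ℝ) * X ≤ (1 + 4^μ) * (Nc:ℝ)^n := by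
    have hcast : (bad.card : ℝ) ≤ (n:ℝ) * a1 * (Nc:ℝ)^(n-1)
        + (n:ℝ)^2 * ((n.choose μ : ℝ) * (b:ℝ)^2) * (Nc:ℝ)^(n-2) := by
      have := hbad
      calc (bad.card : ℝ)
          ≤ ((n * a1 * Nc ^ (n-1) + n^2 * (n.choose μ * b^2) * Nc ^ (n-2) : ℕ) : ℝ) := by
            exact_mod_cast this
        _ = (n:ℝ) * a1 * (Nc:ℝ)^(n-1) + (n:ℝ)^2 * ((n.choose μ : ℝ) * (b:ℝ)^2) * (Nc:ℝ)^(n-2) := by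
            push_cast; ring
    have hp1 : (Nc:ℝ)^(n-1) * (Nc:ℝ) = (Nc:ℝ)^n := by
      rw [← pow_succ]
      congr 1
      omega
    have hp2 : (Nc:ℝ)^(n-2) * (Nc:ℝ)^2 = (Nc:ℝ)^n := by
      rw [← pow_add]
      congr 1
      omega
    calc (bad.card : ℝ) * X
        ≤ ((n:ℝ) * a1 * (Nc:ℝ)^(n-1)
            + (n:ℝ)^2 * ((n.choose μ : ℝ) * (b:ℝ)^2) * (Nc:ℝ)^(n-2)) * X := by
          apply mul_le_mul_of_nonneg_right hcast (by positivity)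
      _ = (X * X * (a1:ℝ)) * (Nc:ℝ)^(n-1)
            + (X * X * X * ((n.choose μ : ℝ) * (b:ℝ)^2)) * (Nc:ℝ)^(n-2) := by
          rw [hX]; push_cast; ring
      _ ≤ (Nc:ℝ) * (Nc:ℝ)^(n-1) + ((4:ℝ)^μ * (Nc:ℝ)^2) * (Nc:ℝ)^(n-2) := by
          apply add_le_add
          · exact mul_le_mul_of_nonneg_right KB1 (by positivity)
          · exact mul_le_mul_of_nonneg_right KB2 (by positivity)
      _ = (1 + 4^μ) * (Nc:ℝ)^n := by
          rw [show (Nc:ℝ) * (Nc:ℝ)^(n-1) = (Nc:ℝ)^(n-1) * (Nc:ℝ) by ring, hp1,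
            show ((4:ℝ)^μ * (Nc:ℝ)^2) * (Nc:ℝ)^(n-2) = (4:ℝ)^μ * ((Nc:ℝ)^(n-2) * (Nc:ℝ)^2) by ring,
            hp2]
          ring
  -- conclude
  have hfilter : (univ.filter (fun ω : Fin n → Sym (Fin n) M =>
      ω ∈ {ω : Fin n → Sym (Fin n) M | goodPlacement δ μ ω})) =
      (univ.filter (fun ω : Fin n → Sym (Fin n) M => goodPlacement δ μ ω)) := by
    apply Finset.filter_congr
    intro ω _
    simp [Set.mem_setOf_eq]
  have hcardrel : (univ.filter (fun ω : Fin n → Sym (Fin n) M => goodPlacement δ μ ω)).card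
      = Nc ^ n - bad.card := by
    have h := Finset.card_filter_add_card_filter_not
      (s := (univ : Finset (Fin n → Sym (Fin n) M)))
      (p := fun ω => goodPlacement δ μ ω)
    rw [Finset.card_univ, htotal] at h
    rw [hbaddef]
    omega
  have hbadle : bad.card ≤ Nc ^ n := by
    calc bad.card ≤ (univ : Finset (Fin n → Sym (Fin n) M)).card :=
          Finset.card_le_card (Finset.filter_subset _ _)
      _ = Nc ^ n := by rw [Finset.card_univ, htotal]
  rw [unifProb, htotal, hfilter, hcardrel]
  have hNcn : (0:ℝ) < ((Nc ^ n : ℕ):ℝ) := by positivity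
  rw [Nat.cast_sub hbadle]
  have hgoal : (bad.card : ℝ) / ((Nc ^ n : ℕ):ℝ) ≤ (1 + 4^μ) / X := by
    rw [div_le_div_iff₀ hNcn hX0]
    calc (bad.card : ℝ) * X ≤ (1 + 4^μ) * (Nc:ℝ)^n := hbadX
      _ = (1 + 4^μ) * ((Nc ^ n : ℕ):ℝ) := by push_cast; ring
  push_cast at hgoal ⊢
  have : ((Nc:ℝ)^n - (bad.card:ℝ)) / (Nc:ℝ)^n = 1 - (bad.card:ℝ)/(Nc:ℝ)^n := by
    field_simp
  rw [this]
  have hXn : X = (n:ℝ) := rfl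
  linarith [hgoal]
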